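/- If Γ' ⊆ Γ ⊆ Ω(G) are nonempty collections of maximum independent sets of G, then |⋃Γ'| + |⋂Γ'| ≤ |⋃Γ| + |⋂Γ|. -/

import Mathlib

open Set

variable {V : Type*}

/-- `S` is an independent set of `G`. -/
def IndepSet (G : SimpleGraph V) (S : Set V) : Prop :=
  ∀ x ∈ S, ∀ y ∈ S, ¬ G.Adj x y

/-- The independence number `α(G)`. -/
noncomputable def alpha (G : SimpleGraph V) : ℕ :=
  sSup {n | ∃ S : Set V, IndepSet G S ∧ S.ncard = n}

/-- `S` is a maximum independent set of `G`. -/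
def MaxIndep (G : SimpleGraph V) (S : Set V) : Prop :=
  IndepSet G S ∧ S.ncard = alpha G

/-- `Ω(G)`, the family of all maximum independent sets. -/
def Omega (G : SimpleGraph V) : Set (Set V) := {S | MaxIndep G S}

/-- `core(G)`, the intersection of all maximum independent sets. -/
def core (G : SimpleGraph V) : Set V := ⋂₀ Omega G

/-- `corona(G)`, the union of all maximum independent sets. -/
def corona (G : SimpleGraph V) : Set V := ⋃₀ Omega G

/-- The matching number `μ(G)`. -/
noncomputable def matchNum (G : SimpleGraph V) : ℕ :=
  sSup {n | ∃ M : G.Subgraph, M.IsMatching ∧ M.edgeSet.ncard = n}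

/-- A matching from `X` into `Y`: an injection `f` on `X` into `Y` such that each `x ∈ X`
is adjacent to `f x` and the edges `{x, f x}` are pairwise disjoint. -/
def MatchingFrom (G : SimpleGraph V) (X Y : Set V) : Prop :=
  ∃ f : V → V, Set.InjOn f X ∧ (∀ x ∈ X, f x ∈ Y ∧ G.Adj x (f x)) ∧
    ∀ x ∈ X, ∀ y ∈ X, x ≠ y → f x ≠ y

lemma indep_ncard_le_alpha [Fintype V] (G : SimpleGraph V) (T : Set V)
    (hT : IndepSet G T) : T.ncard ≤ alpha G := by
  apply le_csSup
  · refine ⟨Fintype.card V, ?_⟩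
    rintro n ⟨S, _, rfl⟩
    calc S.ncard ≤ (Set.univ : Set V).ncard := Set.ncard_le_ncard (Set.subset_univ S) Set.finite_univ
      _ = Fintype.card V := by rw [Set.ncard_univ, Nat.card_eq_fintype_card]
  · exact ⟨T, hT, rfl⟩

lemma key [Fintype V] (G : SimpleGraph V) (Δ : Set (Set V)) (hΔ : Δ ⊆ Omega G)
    (hne : Δ.Nonempty) (S : Set V) (hS : S ∈ Omega G) :
    (⋂₀ Δ \ S).ncard ≤ (S \ ⋃₀ Δ).ncard := by
  set X := ⋂₀ Δ \ S with hX
  set N := {y | ∃ x ∈ X, G.Adj x y} with hN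
  -- N ∩ S ⊆ S \ ⋃₀ Δ
  have hsub : N ∩ S ⊆ S \ ⋃₀ Δ := by
    rintro y ⟨⟨x, hx, hadj⟩, hyS⟩
    refine ⟨hyS, ?_⟩
    rintro ⟨B, hB, hyB⟩
    exact (hΔ hB).1 x (hx.1 B hB) y hyB hadj
  -- |X| ≤ |N ∩ S|
  have hmain : X.ncard ≤ (N ∩ S).ncard := by
    by_contra hlt
    push_neg at hlt
    set S' := (S \ N) ∪ X with hS'
    have hindep : IndepSet G S' := by
      rintro a ha b hb hadj
      rcases ha with ⟨haS, haN⟩ | haX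
      · rcases hb with ⟨hbS, hbN⟩ | hbX
        · exact hS.1 a haS b hbS hadj
        · exact haN ⟨b, hbX, hadj.symm⟩
      · rcases hb with ⟨hbS, hbN⟩ | hbX
        · exact hbN ⟨a, haX, hadj⟩
        · obtain ⟨A, hA⟩ := hne
          exact (hΔ hA).1 a (haX.1 A hA) b (hbX.1 A hA) hadj
    have hdisj : Disjoint (S \ N) X := by
      rw [Set.disjoint_left]; rintro a ⟨haS, _⟩ haX; exact haX.2 haS
    have hcard : S'.ncard = (S \ N).ncard + X.ncard :=
      Set.ncard_union_eq hdisj (S \ N).toFinite X.toFinite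
    have h2 : (S \ N).ncard + (S ∩ N).ncard = S.ncard := by
      rw [← Set.ncard_union_eq (disjoint_of_subset_right Set.inter_subset_right
        disjoint_sdiff_left) (S \ N).toFinite (S ∩ N).toFinite, Set.diff_union_inter]
    have h3 : (S ∩ N).ncard = (N ∩ S).ncard := by rw [Set.inter_comm]
    have hle : S'.ncard ≤ alpha G := indep_ncard_le_alpha G S' hindep
    have h4 : S.ncard = alpha G := hS.2
    omega
  calc X.ncard ≤ (N ∩ S).ncard := hmain
    _ ≤ (S \ ⋃₀ Δ).ncard := Set.ncard_le_ncard hsub (S \ ⋃₀ Δ).toFinite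

lemma step [Fintype V] (G : SimpleGraph V) (Δ : Set (Set V)) (hΔ : Δ ⊆ Omega G)
    (hne : Δ.Nonempty) (S : Set V) (hS : S ∈ Omega G) :
    (⋃₀ Δ).ncard + (⋂₀ Δ).ncard ≤ (⋃₀ insert S Δ).ncard + (⋂₀ insert S Δ).ncard := by
  rw [Set.sUnion_insert, Set.sInter_insert]
  have k := key G Δ hΔ hne S hS
  have hU : (S ∪ ⋃₀ Δ).ncard = (⋃₀ Δ).ncard + (S \ ⋃₀ Δ).ncard := by
    rw [Set.union_comm, ← Set.union_diff_self,
      Set.ncard_union_eq disjoint_sdiff_right (⋃₀ Δ).toFinite (S \ ⋃₀ Δ).toFinite]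
  have hd : Disjoint (⋂₀ Δ ∩ S) (⋂₀ Δ \ S) := by
    rw [Set.disjoint_left]; rintro x ⟨_, hx⟩ ⟨_, hx2⟩; exact hx2 hx
  have hD : (⋂₀ Δ).ncard = (⋂₀ Δ ∩ S).ncard + (⋂₀ Δ \ S).ncard := by
    rw [← Set.ncard_union_eq hd (⋂₀ Δ ∩ S).toFinite (⋂₀ Δ \ S).toFinite,
      Set.inter_union_diff]
  have hDS : (S ∩ ⋂₀ Δ).ncard = (⋂₀ Δ ∩ S).ncard := by rw [Set.inter_comm]
  omega

theorem stmt_4 [Fintype V] (G : SimpleGraph V)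
    (Γ Γ' : Set (Set V)) (h1 : Γ' ⊆ Γ) (h2 : Γ ⊆ Omega G)
    (hΓ'ne : Γ'.Nonempty) (hΓne : Γ.Nonempty) :
    (⋃₀ Γ').ncard + (⋂₀ Γ').ncard ≤ (⋃₀ Γ).ncard + (⋂₀ Γ).ncard := by
  have hfin : Γ.Finite := Set.toFinite Γ
  have main : ∀ T : Set (Set V), T.Finite → T ⊆ Omega G →
      (⋃₀ Γ').ncard + (⋂₀ Γ').ncard ≤ (⋃₀ (Γ' ∪ T)).ncard + (⋂₀ (Γ' ∪ T)).ncard := by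
    intro T hT
    refine Set.Finite.induction_on (motive := fun T _ => T ⊆ Omega G →
      (⋃₀ Γ').ncard + (⋂₀ Γ').ncard ≤ (⋃₀ (Γ' ∪ T)).ncard + (⋂₀ (Γ' ∪ T)).ncard) T hT (by simp) ?_
    rintro a s ha hs ih hsub
    have heq : Γ' ∪ insert a s = insert a (Γ' ∪ s) := by
      ext x; simp [or_left_comm, or_comm, or_assoc]
    rw [heq]
    calc (⋃₀ Γ').ncard + (⋂₀ Γ').ncard
        ≤ (⋃₀ (Γ' ∪ s)).ncard + (⋂₀ (Γ' ∪ s)).ncard :=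
          ih (fun x hx => hsub (Set.mem_insert_of_mem a hx))
      _ ≤ _ := step G (Γ' ∪ s) (Set.union_subset (fun x hx => h2 (h1 hx))
          (fun x hx => hsub (Set.mem_insert_of_mem a hx)))
          (hΓ'ne.mono Set.subset_union_left) a (hsub (Set.mem_insert a s))
  have := main Γ hfin h2
  rwa [Set.union_eq_self_of_subset_left h1] at this
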